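/- Let d be an integer with d ≥ 5, and regard M(d), the 3×3 matrix with rows (−d, 2d, −1), (−1, 1, 0), (−1, 0, 0), as a matrix over ℂ. Then every complex eigenvalue λ of M(d) satisfies |λ| ≤ (d − 2 + √(d² − 4d))/2, and some eigenvalue attains this bound; i.e. the spectral radius of M(d) equals (d − 2 + √(d² − 4d))/2. -/

import Mathlib

/-- For `d ≥ 5`, the spectral radius of `M(d)` is `(d − 2 + √(d² − 4d))/2`. -/
theorem spectralRadius_PhiH_large (d : ℤ) (hd : 5 ≤ d)
    (M : Matrix (Fin 3) (Fin 3) ℂ)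
    (hM : M = !![-(d : ℂ), 2*(d : ℂ), -1; -1, 1, 0; -1, 0, 0]) :
    (∀ μ ∈ spectrum ℂ M,
        ‖μ‖ ≤ ((d : ℝ) - 2 + Real.sqrt ((d : ℝ) ^ 2 - 4 * (d : ℝ))) / 2) ∧
      (∃ μ ∈ spectrum ℂ M,
        ‖μ‖ = ((d : ℝ) - 2 + Real.sqrt ((d : ℝ) ^ 2 - 4 * (d : ℝ))) / 2) := by
  have hd' : (5:ℝ) ≤ (d:ℝ) := by exact_mod_cast hd
  have hdisc : (0:ℝ) ≤ (d:ℝ)^2 - 4*(d:ℝ) := by nlinarith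
  set s := Real.sqrt ((d:ℝ)^2 - 4*(d:ℝ)) with hsdef
  have hs0 : 0 ≤ s := Real.sqrt_nonneg _
  have hs2 : s^2 = (d:ℝ)^2 - 4*(d:ℝ) := Real.sq_sqrt hdisc
  set α : ℝ := ((d:ℝ) - 2 + s)/2 with hα
  set β : ℝ := ((d:ℝ) - 2 - s)/2 with hβ
  have hαpos : 0 < α := by rw [hα]; nlinarith
  have hab : α*β = 1 := by rw [hα, hβ]; nlinarith
  have hβpos : 0 < β := by nlinarith
  have hβα : β ≤ α := by rw [hα, hβ]; nlinarith
  have h1α : 1 ≤ α := by nlinarith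
  have hsum : (α:ℂ) + (β:ℂ) = (d:ℂ) - 2 := by
    push_cast [hα, hβ]; ring
  have hprod : (α:ℂ) * (β:ℂ) = 1 := by exact_mod_cast congrArg Complex.ofReal hab
  have hspec : ∀ μ : ℂ, μ ∈ spectrum ℂ M ↔ (μ+1)*((μ+α)*(μ+β)) = 0 := by
    intro μ
    rw [spectrum.mem_iff, Matrix.isUnit_iff_isUnit_det, isUnit_iff_ne_zero, not_ne_iff]
    have hdet : (algebraMap ℂ (Matrix (Fin 3) (Fin 3) ℂ) μ - M).det
        = (μ+1)*(μ^2+((d:ℂ)-2)*μ+1) := by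
      rw [hM]
      have heq : algebraMap ℂ (Matrix (Fin 3) (Fin 3) ℂ) μ
            - !![-(d : ℂ), 2*(d : ℂ), -1; -1, 1, 0; -1, 0, 0]
          = !![μ+(d:ℂ), -2*(d:ℂ), 1; 1, μ-1, 0; 1, 0, μ] := by
        ext i j
        fin_cases i <;> fin_cases j <;>
          simp [Matrix.algebraMap_matrix_apply, Matrix.vecHead, Matrix.vecTail]
      rw [heq, Matrix.det_fin_three]
      simp [Matrix.vecHead, Matrix.vecTail]
      ring
    rw [hdet]
    constructor
    · intro h
      have : (μ+α)*(μ+β) = μ^2+((d:ℂ)-2)*μ+1 := by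
        rw [show (μ+α)*(μ+β) = μ^2 + ((α:ℂ)+(β:ℂ))*μ + (α:ℂ)*(β:ℂ) by ring, hsum, hprod]
      rw [mul_eq_zero] at h ⊢
      rcases h with h | h
      · exact Or.inl h
      · exact Or.inr (by rw [this]; exact h)
    · intro h
      have : (μ+α)*(μ+β) = μ^2+((d:ℂ)-2)*μ+1 := by
        rw [show (μ+α)*(μ+β) = μ^2 + ((α:ℂ)+(β:ℂ))*μ + (α:ℂ)*(β:ℂ) by ring, hsum, hprod]
      rw [mul_eq_zero] at h ⊢
      rcases h with h | h
      · exact Or.inl h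
      · exact Or.inr (by rw [← this]; exact h)
  constructor
  · intro μ hμ
    rw [hspec] at hμ
    rcases mul_eq_zero.mp hμ with h | h
    · have : μ = -1 := by linear_combination h
      rw [this]
      simpa using h1α
    · rcases mul_eq_zero.mp h with h | h
      · have : μ = -(α:ℂ) := by linear_combination h
        rw [this]
        simp only [norm_neg, Complex.norm_real, Real.norm_eq_abs, abs_of_pos hαpos]
        exact le_refl _
      · have : μ = -(β:ℂ) := by linear_combination h
        rw [this]
        simp only [norm_neg, Complex.norm_real, Real.norm_eq_abs, abs_of_pos hβpos]
        exact hβα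
  · refine ⟨-(α:ℂ), ?_, ?_⟩
    · rw [hspec]; ring
    · simp only [norm_neg, Complex.norm_real, Real.norm_eq_abs, abs_of_pos hαpos]
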